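/- Let (X_i)_{i≥1} be i.i.d. nonnegative real random variables and suppose there is n_0 such that P(X_1 ≥ x) ≤ e^{−√x} for all x ≥ n_0. Then there exist constants C, c ∈ (0,∞) and N ∈ ℕ such that for all n ≥ N: P( Σ_{i=1}^n X_i ≥ Cn ) ≤ e^{−c√n}. -/

import Mathlib

open MeasureTheory ProbabilityTheory Real Set
open scoped ENNReal NNReal

lemma aux_exp1 (u : ℝ) (hu : 0 ≤ u) : Real.exp u ≤ 1 + u * Real.exp u := by
  have hmul : Real.exp (-u) * Real.exp u = 1 := by rw [← Real.exp_add]; simp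
  nlinarith [Real.add_one_le_exp (-u), Real.exp_pos u]

lemma aux_sq_le (x : ℝ) (hx : 0 ≤ x) : x ≤ 64 * Real.exp (Real.sqrt x / 4) := by
  set u := Real.sqrt x
  have hx' : x = u ^ 2 := (Real.sq_sqrt hx).symm
  have hun : 0 ≤ u := Real.sqrt_nonneg x
  have h1 : u / 8 + 1 ≤ Real.exp (u / 8) := Real.add_one_le_exp _
  have h2 : Real.exp (u / 8) * Real.exp (u / 8) = Real.exp (u / 4) := by
    rw [← Real.exp_add]; ring_nf
  nlinarith [Real.exp_pos (u / 8)]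

lemma aux_poly (s : ℝ) (hs : 52 ≤ s) : s ^ 2 + 1 ≤ Real.exp ((3 / 4) * s) := by
  have h1 : 1 + s / 4 ≤ Real.exp (s / 4) := by
    have := Real.add_one_le_exp (s / 4); linarith
  have h2 : Real.exp (s / 4) * Real.exp (s / 4) * Real.exp (s / 4) = Real.exp ((3/4) * s) := by
    rw [← Real.exp_add, ← Real.exp_add]; ring_nf
  have h0 : (0:ℝ) ≤ 1 + s / 4 := by linarith
  have hb : (0:ℝ) ≤ Real.exp (s/4) := (Real.exp_pos _).le
  have h4 : (1 + s/4) * (1 + s/4) ≤ Real.exp (s/4) * Real.exp (s/4) :=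
    mul_le_mul h1 h1 h0 hb
  have h5 : (1 + s/4) * (1 + s/4) * (1 + s/4) ≤
      Real.exp (s/4) * Real.exp (s/4) * Real.exp (s/4) :=
    mul_le_mul h4 h1 h0 (by positivity)
  nlinarith

lemma integrable_exp_sqrt {Ω : Type*} [MeasurableSpace Ω] (P : Measure Ω) [IsProbabilityMeasure P]
    (X : Ω → ℝ) (hm : Measurable X) (hnn : ∀ ω, 0 ≤ X ω) (n₀ : ℕ)
    (htail : ∀ x : ℝ, (n₀ : ℝ) ≤ x →
      P {ω | x ≤ X ω} ≤ ENNReal.ofReal (Real.exp (-Real.sqrt x))) :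
    Integrable (fun ω => Real.exp ((3/4) * Real.sqrt (X ω))) P := by
  set W : Ω → ℝ := fun ω => Real.exp ((3/4) * Real.sqrt (X ω)) with hW
  have hWm : Measurable W :=
    Real.measurable_exp.comp ((Real.continuous_sqrt.measurable.comp hm).const_mul (3/4))
  refine ⟨hWm.aestronglyMeasurable, ?_⟩
  rw [HasFiniteIntegral]
  have hnorm : ∀ ω, (‖W ω‖ₑ) = ENNReal.ofReal (W ω) := fun ω =>
    Real.enorm_eq_ofReal (Real.exp_pos _).le
  simp_rw [hnorm]
  rw [lintegral_eq_lintegral_meas_lt P (ae_of_all _ fun ω => (Real.exp_pos _).le)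
    hWm.aemeasurable]
  set s₀ : ℝ := Real.exp ((3/4) * Real.sqrt (n₀ : ℝ)) with hs₀
  have hs₀pos : 0 < s₀ := Real.exp_pos _
  rw [← Ioc_union_Ioi_eq_Ioi hs₀pos.le, lintegral_union measurableSet_Ioi
    (Ioc_disjoint_Ioi le_rfl)]
  have h1 : ∫⁻ t in Ioc 0 s₀, P {a | t < W a} ≤ ENNReal.ofReal s₀ := by
    calc ∫⁻ t in Ioc 0 s₀, P {a | t < W a} ≤ ∫⁻ _ in Ioc 0 s₀, 1 :=
          lintegral_mono fun t => prob_le_one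
      _ = volume (Ioc (0:ℝ) s₀) := setLIntegral_one _
      _ = ENNReal.ofReal s₀ := by rw [Real.volume_Ioc, sub_zero]
  have h2 : ∫⁻ t in Ioi s₀, P {a | t < W a} ≤
      ∫⁻ t in Ioi s₀, ENNReal.ofReal (t ^ (-(4/3) : ℝ)) := by
    refine setLIntegral_mono' measurableSet_Ioi fun t ht => ?_
    have ht0 : 0 < t := lt_trans hs₀pos ht
    have hlog : Real.sqrt (n₀ : ℝ) < (4/3) * Real.log t := by
      have := Real.log_lt_log hs₀pos ht
      rw [hs₀, Real.log_exp] at this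
      linarith
    have hlognn : 0 ≤ (4/3) * Real.log t :=
      le_trans (Real.sqrt_nonneg _) hlog.le
    have hsub : {a | t < W a} ⊆ {a | ((4/3) * Real.log t) ^ 2 ≤ X a} := by
      intro a ha
      simp only [Set.mem_setOf_eq] at ha ⊢
      have hlt : Real.log t < (3/4) * Real.sqrt (X a) := by
        have := Real.log_lt_log ht0 ha
        rwa [Real.log_exp] at this
      have h43 : (4/3) * Real.log t ≤ Real.sqrt (X a) := by linarith
      calc ((4/3) * Real.log t) ^ 2 ≤ Real.sqrt (X a) ^ 2 := by
            exact pow_le_pow_left₀ hlognn h43 2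
        _ = X a := Real.sq_sqrt (hnn a)
    have hx : (n₀ : ℝ) ≤ ((4/3) * Real.log t) ^ 2 := by
      calc (n₀ : ℝ) = Real.sqrt (n₀ : ℝ) ^ 2 := (Real.sq_sqrt (Nat.cast_nonneg _)).symm
        _ ≤ ((4/3) * Real.log t) ^ 2 := pow_le_pow_left₀ (Real.sqrt_nonneg _) hlog.le 2
    calc P {a | t < W a} ≤ P {a | ((4/3) * Real.log t) ^ 2 ≤ X a} := measure_mono hsub
      _ ≤ ENNReal.ofReal (Real.exp (-Real.sqrt (((4/3) * Real.log t) ^ 2))) := htail _ hx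
      _ = ENNReal.ofReal (t ^ (-(4/3) : ℝ)) := by
          rw [Real.sqrt_sq hlognn, Real.rpow_def_of_pos ht0]
          ring_nf
  have h3 : ∫⁻ t in Ioi s₀, ENNReal.ofReal (t ^ (-(4/3) : ℝ)) < ⊤ := by
    have hint : IntegrableOn (fun t : ℝ => t ^ (-(4/3) : ℝ)) (Ioi s₀) :=
      integrableOn_Ioi_rpow_of_lt (by norm_num) hs₀pos
    calc ∫⁻ t in Ioi s₀, ENNReal.ofReal (t ^ (-(4/3) : ℝ))
        ≤ ∫⁻ t in Ioi s₀, (‖(t ^ (-(4/3) : ℝ))‖ₑ) :=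
          lintegral_mono fun t => Real.ofReal_le_enorm _
      _ < ⊤ := hint.2
  have hlt1 : ∫⁻ t in Ioc 0 s₀, P {a | t < W a} < ⊤ :=
    lt_of_le_of_lt h1 ENNReal.ofReal_lt_top
  exact ENNReal.add_lt_top.mpr ⟨hlt1, lt_of_le_of_lt h2 h3⟩

/-- Lemma A.3. If `(X_i)` are i.i.d. nonnegative random
variables with `P(X₁ ≥ x) ≤ e^{−√x}` for all `x ≥ n₀`, then there are constants
`C, c ∈ (0,∞)` such that `P(Σ_{i=1}^n X_i ≥ Cn) ≤ e^{−c√n}` for all large `n`. -/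
theorem subexponential_sum_bound {Ω : Type*} [MeasurableSpace Ω]
    (P : Measure Ω) [IsProbabilityMeasure P]
    (X : ℕ → Ω → ℝ) (hmeas : ∀ i, Measurable (X i))
    (hindep : iIndepFun X P)
    (hident : ∀ i, P.map (X i) = P.map (X 0))
    (hnonneg : ∀ i ω, 0 ≤ X i ω)
    (n₀ : ℕ)
    (htail : ∀ x : ℝ, (n₀ : ℝ) ≤ x →
      P {ω | x ≤ X 0 ω} ≤ ENNReal.ofReal (Real.exp (-Real.sqrt x))) :
    ∃ C : ℝ, 0 < C ∧ ∃ c : ℝ, 0 < c ∧ ∃ N : ℕ, ∀ n : ℕ, N ≤ n →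
      P {ω | C * (n : ℝ) ≤ ∑ i ∈ Finset.range n, X i ω} ≤
        ENNReal.ofReal (Real.exp (-(c * Real.sqrt (n : ℝ)))) := by
  classical
  -- the dominating random variable and its expectation
  set Z : Ω → ℝ := fun ω => X 0 ω * Real.exp (Real.sqrt (X 0 ω) / 2) with hZ
  have hZmeas : Measurable Z :=
    (hmeas 0).mul (Real.measurable_exp.comp
      ((Real.continuous_sqrt.measurable.comp (hmeas 0)).div_const 2))
  have hWint : Integrable (fun ω => Real.exp ((3/4) * Real.sqrt (X 0 ω))) P :=
    integrable_exp_sqrt P (X 0) (hmeas 0) (hnonneg 0) n₀ htail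
  have hZint : Integrable Z P := by
    refine (hWint.const_mul 64).mono hZmeas.aestronglyMeasurable (ae_of_all _ fun ω => ?_)
    have h0 : 0 ≤ X 0 ω := hnonneg 0 ω
    have hb : Z ω ≤ 64 * Real.exp ((3/4) * Real.sqrt (X 0 ω)) := by
      have h1 : X 0 ω ≤ 64 * Real.exp (Real.sqrt (X 0 ω) / 4) := aux_sq_le _ h0
      have h2 : Real.exp (Real.sqrt (X 0 ω) / 4) * Real.exp (Real.sqrt (X 0 ω) / 2)
          = Real.exp ((3/4) * Real.sqrt (X 0 ω)) := by rw [← Real.exp_add]; ring_nf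
      calc Z ω ≤ (64 * Real.exp (Real.sqrt (X 0 ω) / 4)) * Real.exp (Real.sqrt (X 0 ω) / 2) :=
            mul_le_mul_of_nonneg_right h1 (Real.exp_pos _).le
        _ = 64 * Real.exp ((3/4) * Real.sqrt (X 0 ω)) := by rw [mul_assoc, h2]
    have hZnn : 0 ≤ Z ω := mul_nonneg h0 (Real.exp_pos _).le
    rw [Real.norm_eq_abs, Real.norm_eq_abs, abs_of_nonneg hZnn, abs_of_nonneg (by positivity)]
    exact hb
  set K : ℝ := ∫ ω, Z ω ∂P with hK
  have hK0 : 0 ≤ K := integral_nonneg fun ω => mul_nonneg (hnonneg 0 ω) (Real.exp_pos _).le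
  refine ⟨K + 2, by linarith, 1/4, by norm_num, n₀ + 2704, fun n hn => ?_⟩
  -- basic facts about n
  have hn1 : 1 ≤ n := le_trans (by norm_num) hn
  have hnR : (0:ℝ) < n := by exact_mod_cast hn1
  set s : ℝ := Real.sqrt n with hs
  have hs0 : 0 < s := Real.sqrt_pos.mpr hnR
  have hs2 : s ^ 2 = (n : ℝ) := Real.sq_sqrt hnR.le
  have hs52 : 52 ≤ s := by
    have h1 : (2704 : ℝ) ≤ (n : ℝ) := by
      have : (2704 : ℕ) ≤ n := le_trans (Nat.le_add_left _ _) hn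
      exact_mod_cast this
    have h2 : Real.sqrt 2704 ≤ s := Real.sqrt_le_sqrt h1
    have h3 : Real.sqrt 2704 = 52 := by
      rw [show (2704:ℝ) = 52 ^ 2 by norm_num, Real.sqrt_sq (by norm_num)]
    linarith
  have hnn0 : (n₀ : ℝ) ≤ (n : ℝ) := by
    exact_mod_cast le_trans (Nat.le_add_right _ _) hn
  set t : ℝ := 1 / (2 * s) with ht
  have ht0 : 0 < t := by positivity
  -- truncated variables
  set Y : ℕ → Ω → ℝ := fun i ω => min (X i ω) n with hY
  have hYmeas : ∀ i, Measurable (Y i) := fun i => (hmeas i).min measurable_const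
  have hYindep : iIndepFun Y P :=
    hindep.comp (fun _ x => min x (n:ℝ)) (fun _ => measurable_id.min measurable_const)
  -- pointwise exponential bound
  have hpt : ∀ x : ℝ, 0 ≤ x →
      Real.exp (t * min x n) ≤ 1 + t * (x * Real.exp (Real.sqrt x / 2)) := by
    intro x hx
    have hmin0 : 0 ≤ min x (n:ℝ) := le_min hx hnR.le
    have hu0 : 0 ≤ t * min x n := mul_nonneg ht0.le hmin0
    have hub : t * min x n ≤ Real.sqrt x / 2 := by
      rcases le_total x n with h | h
      · rw [min_eq_left h]
        have hsx : Real.sqrt x ≤ s := Real.sqrt_le_sqrt h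
        have hxx : x = Real.sqrt x * Real.sqrt x := (Real.mul_self_sqrt hx).symm
        rw [ht]
        rw [div_mul_eq_mul_div, one_mul, div_le_div_iff₀ (by positivity) (by norm_num)]
        calc x * 2 = 2 * (Real.sqrt x * Real.sqrt x) := by rw [← hxx]; ring
          _ ≤ 2 * (Real.sqrt x * s) := by
              have := mul_le_mul_of_nonneg_left hsx (Real.sqrt_nonneg x)
              nlinarith [Real.sqrt_nonneg x]
          _ = Real.sqrt x * (2 * s) := by ring
      · rw [min_eq_right h]
        have hsx : s ≤ Real.sqrt x := Real.sqrt_le_sqrt h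
        have : t * (n:ℝ) = s / 2 := by
          rw [ht, ← hs2]; field_simp
        rw [this]; linarith
    have h1 : Real.exp (t * min x n) ≤ 1 + (t * min x n) * Real.exp (t * min x n) :=
      aux_exp1 _ hu0
    have h2 : (t * min x n) * Real.exp (t * min x n) ≤ (t * x) * Real.exp (Real.sqrt x / 2) := by
      apply mul_le_mul
      · exact mul_le_mul_of_nonneg_left (min_le_left _ _) ht0.le
      · exact Real.exp_le_exp.mpr hub
      · exact (Real.exp_pos _).le
      · positivity
    calc Real.exp (t * min x n) ≤ 1 + (t * min x n) * Real.exp (t * min x n) := h1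
      _ ≤ 1 + (t * x) * Real.exp (Real.sqrt x / 2) := by linarith
      _ = 1 + t * (x * Real.exp (Real.sqrt x / 2)) := by ring
  -- integrability of exp(t * Y i)
  have hYint : ∀ i, Integrable (fun ω => Real.exp (t * Y i ω)) P := by
    intro i
    refine Integrable.mono' (integrable_const (Real.exp (t * n)))
      (((hYmeas i).const_mul t).exp).aestronglyMeasurable (ae_of_all _ fun ω => ?_)
    rw [Real.norm_eq_abs, abs_of_nonneg (Real.exp_pos _).le]
    exact Real.exp_le_exp.mpr (mul_le_mul_of_nonneg_left (min_le_right _ _) ht0.le)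
  -- identical distribution of mgf's
  have hmgfi : ∀ i, mgf (Y i) P t = mgf (Y 0) P t := by
    intro i
    have hg : AEStronglyMeasurable (fun x : ℝ => Real.exp (t * min x n)) (P.map (X i)) :=
      (Real.measurable_exp.comp ((measurable_id.min measurable_const).const_mul t)
        ).aestronglyMeasurable
    have hg0 : AEStronglyMeasurable (fun x : ℝ => Real.exp (t * min x n)) (P.map (X 0)) := by
      rw [hident i] at hg; exact hg
    rw [mgf, mgf]
    have e1 : ∫ ω, Real.exp (t * Y i ω) ∂P
        = ∫ x, Real.exp (t * min x n) ∂(P.map (X i)) :=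
      (integral_map (hmeas i).aemeasurable hg).symm
    have e2 : ∫ ω, Real.exp (t * Y 0 ω) ∂P
        = ∫ x, Real.exp (t * min x n) ∂(P.map (X 0)) :=
      (integral_map (hmeas 0).aemeasurable hg0).symm
    rw [show (fun ω => Real.exp (t * Y i ω)) = fun ω => Real.exp (t * Y i ω) from rfl]
    calc (∫ ω, Real.exp (t * Y i ω) ∂P)
        = ∫ x, Real.exp (t * min x n) ∂(P.map (X i)) := e1
      _ = ∫ x, Real.exp (t * min x n) ∂(P.map (X 0)) := by rw [hident i]
      _ = ∫ ω, Real.exp (t * Y 0 ω) ∂P := e2.symm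
  -- mgf bound
  have hmgf0 : mgf (Y 0) P t ≤ 1 + t * K := by
    rw [mgf]
    have hle : ∀ ω, Real.exp (t * Y 0 ω) ≤ 1 + t * Z ω := fun ω => hpt _ (hnonneg 0 ω)
    calc (∫ ω, Real.exp (t * Y 0 ω) ∂P) ≤ ∫ ω, (1 + t * Z ω) ∂P :=
          integral_mono (hYint 0) ((integrable_const 1).add (hZint.const_mul t)) hle
      _ = 1 + t * K := by
          rw [integral_add (integrable_const 1) (hZint.const_mul t), integral_const,
            integral_const_mul]
          simp [hK]
  -- Chernoff bound for the truncated sum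
  have hintsum : Integrable (fun ω => Real.exp (t * (∑ i ∈ Finset.range n, Y i) ω)) P :=
    hYindep.integrable_exp_mul_sum hYmeas (fun i _ => hYint i)
  have hchern := measure_ge_le_exp_mul_mgf (X := ∑ i ∈ Finset.range n, Y i) (μ := P)
    ((K + 2) * n) ht0.le hintsum
  have hmgfsum : mgf (∑ i ∈ Finset.range n, Y i) P t = (mgf (Y 0) P t) ^ n := by
    rw [hYindep.mgf_sum hYmeas, Finset.prod_congr rfl (fun i _ => hmgfi i),
      Finset.prod_const, Finset.card_range]
  have htn : t * (n : ℝ) = s / 2 := by rw [ht, ← hs2]; field_simp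
  have hchern2 : (P {ω | (K + 2) * (n:ℝ) ≤ (∑ i ∈ Finset.range n, Y i) ω}).toReal
      ≤ Real.exp (-s) := by
    have hm1 : mgf (Y 0) P t ≤ Real.exp (t * K) := by
      have := Real.add_one_le_exp (t * K)
      calc mgf (Y 0) P t ≤ 1 + t * K := hmgf0
        _ ≤ Real.exp (t * K) := by linarith
    have hm2 : (mgf (Y 0) P t) ^ n ≤ Real.exp (t * K) ^ n :=
      pow_le_pow_left₀ (mgf_nonneg) hm1 n
    have hexp : Real.exp (-t * ((K + 2) * n)) * Real.exp (t * K) ^ n = Real.exp (-s) := by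
      rw [← Real.exp_nat_mul, ← Real.exp_add]
      congr 1
      linear_combination (-2 : ℝ) * htn
    calc (P {ω | (K + 2) * (n:ℝ) ≤ (∑ i ∈ Finset.range n, Y i) ω}).toReal
        ≤ Real.exp (-t * ((K + 2) * n)) * mgf (∑ i ∈ Finset.range n, Y i) P t := hchern
      _ = Real.exp (-t * ((K + 2) * n)) * (mgf (Y 0) P t) ^ n := by rw [hmgfsum]
      _ ≤ Real.exp (-t * ((K + 2) * n)) * Real.exp (t * K) ^ n :=
          mul_le_mul_of_nonneg_left hm2 (Real.exp_pos _).le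
      _ = Real.exp (-s) := hexp
  have hPG : P {ω | (K + 2) * (n:ℝ) ≤ (∑ i ∈ Finset.range n, Y i) ω}
      ≤ ENNReal.ofReal (Real.exp (-s)) := by
    rw [← ENNReal.ofReal_toReal (measure_ne_top P _)]
    exact ENNReal.ofReal_le_ofReal hchern2
  -- union bound for the bad event
  have hXi : ∀ i, P {ω | (n:ℝ) ≤ X i ω} = P {ω | (n:ℝ) ≤ X 0 ω} := by
    intro i
    have e : ∀ j : ℕ, P {ω | (n:ℝ) ≤ X j ω} = P.map (X j) (Ici (n:ℝ)) := fun j => by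
      rw [Measure.map_apply (hmeas j) measurableSet_Ici]; rfl
    rw [e i, e 0, hident i]
  have hbad : P (⋃ i ∈ Finset.range n, {ω | (n:ℝ) ≤ X i ω})
      ≤ (n : ℝ≥0∞) * ENNReal.ofReal (Real.exp (-s)) := by
    calc P (⋃ i ∈ Finset.range n, {ω | (n:ℝ) ≤ X i ω})
        ≤ ∑ i ∈ Finset.range n, P {ω | (n:ℝ) ≤ X i ω} := measure_biUnion_finset_le _ _
      _ = ∑ _i ∈ Finset.range n, P {ω | (n:ℝ) ≤ X 0 ω} :=
          Finset.sum_congr rfl (fun i _ => hXi i)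
      _ = (n : ℝ≥0∞) * P {ω | (n:ℝ) ≤ X 0 ω} := by
          rw [Finset.sum_const, Finset.card_range, nsmul_eq_mul]
      _ ≤ (n : ℝ≥0∞) * ENNReal.ofReal (Real.exp (-s)) := by
          gcongr
          have h := htail (n : ℝ) hnn0
          rwa [← hs] at h
  -- event inclusion
  have hincl : {ω | (K + 2) * (n:ℝ) ≤ ∑ i ∈ Finset.range n, X i ω} ⊆
      (⋃ i ∈ Finset.range n, {ω | (n:ℝ) ≤ X i ω}) ∪
      {ω | (K + 2) * (n:ℝ) ≤ (∑ i ∈ Finset.range n, Y i) ω} := by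
    intro ω hω
    by_cases hcase : ∃ i ∈ Finset.range n, (n:ℝ) ≤ X i ω
    · obtain ⟨i, hi, hXi'⟩ := hcase
      exact Or.inl (Set.mem_biUnion hi hXi')
    · right
      push_neg at hcase
      simp only [Set.mem_setOf_eq, Finset.sum_apply]
      have heq : ∀ i ∈ Finset.range n, Y i ω = X i ω := fun i hi =>
        min_eq_left (hcase i hi).le
      rw [Finset.sum_congr rfl heq]
      exact hω
  -- combine
  calc P {ω | (K + 2) * (n:ℝ) ≤ ∑ i ∈ Finset.range n, X i ω}
      ≤ P ((⋃ i ∈ Finset.range n, {ω | (n:ℝ) ≤ X i ω}) ∪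
          {ω | (K + 2) * (n:ℝ) ≤ (∑ i ∈ Finset.range n, Y i) ω}) := measure_mono hincl
    _ ≤ P (⋃ i ∈ Finset.range n, {ω | (n:ℝ) ≤ X i ω}) +
        P {ω | (K + 2) * (n:ℝ) ≤ (∑ i ∈ Finset.range n, Y i) ω} := measure_union_le _ _
    _ ≤ (n : ℝ≥0∞) * ENNReal.ofReal (Real.exp (-s)) + ENNReal.ofReal (Real.exp (-s)) :=
        add_le_add hbad hPG
    _ = ENNReal.ofReal (((n:ℝ) + 1) * Real.exp (-s)) := by
        rw [← ENNReal.ofReal_natCast n, ← ENNReal.ofReal_mul (Nat.cast_nonneg n),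
          ← ENNReal.ofReal_add (by positivity) (Real.exp_pos _).le]
        congr 1
        ring
    _ ≤ ENNReal.ofReal (Real.exp (-(1/4 * s))) := by
        apply ENNReal.ofReal_le_ofReal
        have hpoly := aux_poly s hs52
        have hn1' : ((n:ℝ) + 1) = s ^ 2 + 1 := by rw [hs2]
        rw [hn1']
        have he : Real.exp ((3/4) * s) * Real.exp (-s) = Real.exp (-(1/4 * s)) := by
          rw [← Real.exp_add]; ring_nf
        calc (s ^ 2 + 1) * Real.exp (-s) ≤ Real.exp ((3/4) * s) * Real.exp (-s) :=
              mul_le_mul_of_nonneg_right hpoly (Real.exp_pos _).le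
          _ = Real.exp (-(1/4 * s)) := he
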